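/- Let n > 0 be a real number, let (X,d,μ) be a metric measure space, let x ∈ X, R > 0, and suppose there are constants c, C > 0 such that c ≤ Θ_x(s) ≤ C for every s ∈ (0, R²]. Then there exist constants v, V > 0 depending only on n, c and C such that v·r^n ≤ μ(B_r(x)) ≤ V·r^n for every r ∈ (0, R]. -/

import Mathlib

set_option maxHeartbeats 1000000
open MeasureTheory Metric Filter Set
open scoped ENNReal

/-- The measure is finite and nonzero on every ball of positive radius. -/
def BallMeasureNontrivial {X : Type*} [MetricSpace X] [MeasurableSpace X]
    (μ : Measure X) : Prop :=
  ∀ (x : X) (r : ℝ), 0 < r → 0 < μ (ball x r) ∧ μ (ball x r) < ⊤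

/-- The `Θ`-volume `Θ_x(s) = (4πs)^{-n/2} ∫_X exp(−d(x,y)²/(4s)) dμ(y)`,
as an extended nonnegative real. -/
noncomputable def Theta {X : Type*} [MetricSpace X] [MeasurableSpace X] (μ : Measure X)
    (n : ℝ) (x : X) (s : ℝ) : ℝ≥0∞ :=
  ENNReal.ofReal ((4 * Real.pi * s) ^ (-(n / 2))) *
    ∫⁻ y, ENNReal.ofReal (Real.exp (-(dist x y) ^ 2 / (4 * s))) ∂μ

/- auxiliary cancellation lemmas in `ℝ≥0∞` -/
lemma ofReal_cancel_le {p : ℝ} (hp : 0 < p) {a b : ℝ≥0∞}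
    (h : ENNReal.ofReal p⁻¹ * a ≤ b) : a ≤ ENNReal.ofReal p * b := by
  have h1 : ENNReal.ofReal p * ENNReal.ofReal p⁻¹ = 1 := by
    rw [← ENNReal.ofReal_mul hp.le, mul_inv_cancel₀ hp.ne', ENNReal.ofReal_one]
  calc a = ENNReal.ofReal p * (ENNReal.ofReal p⁻¹ * a) := by rw [← mul_assoc, h1, one_mul]
    _ ≤ ENNReal.ofReal p * b := mul_le_mul_right h _

lemma ofReal_cancel_ge {p : ℝ} (hp : 0 < p) {a b : ℝ≥0∞}
    (h : b ≤ ENNReal.ofReal p⁻¹ * a) : ENNReal.ofReal p * b ≤ a := by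
  have h1 : ENNReal.ofReal p * ENNReal.ofReal p⁻¹ = 1 := by
    rw [← ENNReal.ofReal_mul hp.le, mul_inv_cancel₀ hp.ne', ENNReal.ofReal_one]
  calc ENNReal.ofReal p * b ≤ ENNReal.ofReal p * (ENNReal.ofReal p⁻¹ * a) :=
        mul_le_mul_right h _
    _ = a := by rw [← mul_assoc, h1, one_mul]

/-- Existence of a suitably small scale parameter `δ`. -/
lemma exists_delta (n c C : ℝ) (hn : 0 < n) (hc : 0 < c) (hC : 0 < C) :
    ∃ δ : ℝ, 0 < δ ∧ δ < 1 ∧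
      Real.exp (1/4 - 1/(4*δ)) * C ≤ c/2 * δ ^ (n/2) := by
  have h0 : Tendsto (fun u : ℝ => u ^ (n/2) * Real.exp (-(1/4) * u)) atTop (nhds 0) :=
    tendsto_rpow_mul_exp_neg_mul_atTop_nhds_zero _ _ (by norm_num)
  have hε : (0:ℝ) < c / (2 * C * Real.exp (1/4)) := by positivity
  have hev : ∀ᶠ u in atTop, u ^ (n/2) * Real.exp (-(1/4) * u) < c / (2 * C * Real.exp (1/4)) := by
    have := h0.eventually (eventually_lt_nhds hε)
    simpa using this
  obtain ⟨u0, hu0⟩ := hev.exists_forall_of_atTop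
  set u := max u0 2 with hu
  have hu2 : (2:ℝ) ≤ u := le_max_right _ _
  have hupos : (0:ℝ) < u := by linarith
  have hkey : u ^ (n/2) * Real.exp (-(1/4) * u) < c / (2 * C * Real.exp (1/4)) :=
    hu0 u (le_max_left _ _)
  refine ⟨u⁻¹, inv_pos.mpr hupos, ?_, ?_⟩
  · rw [inv_lt_one_iff₀]; right; linarith
  · have hinv : (u⁻¹)⁻¹ = u := inv_inv u
    have hupow : (0:ℝ) < u ^ (n/2) := Real.rpow_pos_of_pos hupos _
    have h1 : (u⁻¹ : ℝ) ^ (n/2) = (u ^ (n/2))⁻¹ := Real.inv_rpow hupos.le _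
    have h2 : Real.exp (1/4 - 1/(4*u⁻¹)) = Real.exp (1/4) * Real.exp (-(1/4) * u) := by
      rw [← Real.exp_add]
      congr 1
      field_simp
      ring
    rw [h1, h2]
    have h3 := mul_le_mul_of_nonneg_right hkey.le
      (show (0:ℝ) ≤ 2*C*Real.exp (1/4) by positivity)
    rw [div_mul_cancel₀ _ (by positivity : (2*C*Real.exp (1/4)) ≠ 0)] at h3
    have hmain : Real.exp (1/4) * Real.exp (-(1/4)*u) * C * u^(n/2) ≤ c/2 := by
      have e : u^(n/2) * Real.exp (-(1/4)*u) * (2*C*Real.exp (1/4))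
          = 2*(Real.exp (1/4) * Real.exp (-(1/4)*u) * C * u^(n/2)) := by ring
      linarith [e ▸ h3]
    rw [mul_comm (c/2) _, mul_comm ((u ^ (n/2))⁻¹) _, ← div_eq_mul_inv, le_div_iff₀ hupow]
    exact hmain

/-- If `c ≤ Θ_x(s) ≤ C` for all `s ∈ (0,R²]`, then `v·r^n ≤ μ(B_r(x)) ≤ V·r^n` for all
`r ∈ (0,R]`, where `v, V > 0` depend only on `n`, `c` and `C`. -/
theorem theta_volume_bounds_ball_measure (n c C : ℝ) (hn : 0 < n) (hc : 0 < c) (hC : 0 < C) :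
    ∃ v V : ℝ, 0 < v ∧ 0 < V ∧
      ∀ (X : Type) [MetricSpace X] [MeasurableSpace X] [BorelSpace X]
        (μ : Measure X), BallMeasureNontrivial μ →
        ∀ (x : X) (R : ℝ), 0 < R →
          (∀ s : ℝ, 0 < s → s ≤ R ^ 2 →
            ENNReal.ofReal c ≤ Theta μ n x s ∧ Theta μ n x s ≤ ENNReal.ofReal C) →
          ∀ r : ℝ, 0 < r → r ≤ R →
            ENNReal.ofReal (v * r ^ n) ≤ μ (ball x r) ∧
              μ (ball x r) ≤ ENNReal.ofReal (V * r ^ n) := by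
  obtain ⟨δ, hδ0, hδ1, hδ⟩ := exists_delta n c C hn hc hC
  have hπ : (0:ℝ) < 4 * Real.pi := by positivity
  refine ⟨c/2 * (4*Real.pi*δ) ^ (n/2), C * (4*Real.pi) ^ (n/2) * Real.exp (1/4),
    by positivity, by positivity, ?_⟩
  intro X _ _ _ μ hμ x R hR hΘ r hr hrR
  have hBmeas : MeasurableSet (ball x r) := measurableSet_ball
  have hrr : (0:ℝ) < r^2 := by positivity
  have hr2R : r^2 ≤ R^2 := by nlinarith
  have hs0 : 0 < δ * r^2 := by positivity
  have hsR : δ * r^2 ≤ R^2 := by nlinarith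
  have hmeas : ∀ s : ℝ, Measurable fun y : X =>
      ENNReal.ofReal (Real.exp (-(dist x y)^2/(4*s))) := by
    intro s
    fun_prop
  -- the square-root rpow identity
  have hsq : ∀ a : ℝ, 0 < a → (a * r^2) ^ (n/2) = a ^ (n/2) * r ^ n := by
    intro a ha
    rw [Real.mul_rpow ha.le (sq_nonneg r)]
    congr 1
    rw [← Real.rpow_natCast r 2, ← Real.rpow_mul hr.le]
    norm_num
    congr 1
    ring
  -- integral bounds from the Theta bounds
  have key : ∀ s : ℝ, 0 < s → s ≤ R^2 →
      ENNReal.ofReal (c * (4*Real.pi*s) ^ (n/2)) ≤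
        (∫⁻ y, ENNReal.ofReal (Real.exp (-(dist x y)^2/(4*s))) ∂μ) ∧
      (∫⁻ y, ENNReal.ofReal (Real.exp (-(dist x y)^2/(4*s))) ∂μ) ≤
        ENNReal.ofReal (C * (4*Real.pi*s) ^ (n/2)) := by
    intro s hs hsR'
    obtain ⟨h1, h2⟩ := hΘ s hs hsR'
    have hP : (0:ℝ) < (4*Real.pi*s) ^ (n/2) := by positivity
    rw [Theta, Real.rpow_neg (by positivity)] at h1 h2
    constructor
    · calc ENNReal.ofReal (c * (4*Real.pi*s) ^ (n/2))
          = ENNReal.ofReal ((4*Real.pi*s) ^ (n/2)) * ENNReal.ofReal c := by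
            rw [← ENNReal.ofReal_mul hP.le, mul_comm]
        _ ≤ _ := ofReal_cancel_ge hP h1
    · calc (∫⁻ y, ENNReal.ofReal (Real.exp (-(dist x y)^2/(4*s))) ∂μ)
          ≤ ENNReal.ofReal ((4*Real.pi*s) ^ (n/2)) * ENNReal.ofReal C := ofReal_cancel_le hP h2
        _ = ENNReal.ofReal (C * (4*Real.pi*s) ^ (n/2)) := by
            rw [← ENNReal.ofReal_mul hP.le, mul_comm]
  obtain ⟨keylow, keyup⟩ := key (r^2) hrr hr2R
  obtain ⟨keylow', _⟩ := key (δ * r^2) hs0 hsR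
  constructor
  · -- lower bound
    -- split the integral at scale δ r² over the ball and its complement
    set g := fun y : X => ENNReal.ofReal (Real.exp (-(dist x y)^2/(4*(δ*r^2)))) with hg
    have hsplit : (∫⁻ y, g y ∂μ) =
        (∫⁻ y in ball x r, g y ∂μ) + ∫⁻ y in (ball x r)ᶜ, g y ∂μ :=
      (lintegral_add_compl g hBmeas).symm
    have hball : (∫⁻ y in ball x r, g y ∂μ) ≤ μ (ball x r) := by
      calc (∫⁻ y in ball x r, g y ∂μ) ≤ ∫⁻ _ in ball x r, 1 ∂μ := by
            apply setLIntegral_mono measurable_one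
            intro y _
            rw [hg]
            refine ENNReal.ofReal_le_one.mpr ?_
            rw [← Real.exp_zero]
            apply Real.exp_le_exp.mpr
            exact div_nonpos_of_nonpos_of_nonneg (neg_nonpos.mpr (by positivity)) (by positivity)
        _ = μ (ball x r) := setLIntegral_one _
    have htail : (∫⁻ y in (ball x r)ᶜ, g y ∂μ) ≤
        ENNReal.ofReal (Real.exp (1/4 - 1/(4*δ))) *
          ∫⁻ y, ENNReal.ofReal (Real.exp (-(dist x y)^2/(4*r^2))) ∂μ := by
      calc (∫⁻ y in (ball x r)ᶜ, g y ∂μ)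
          ≤ ∫⁻ y in (ball x r)ᶜ, ENNReal.ofReal (Real.exp (1/4 - 1/(4*δ))) *
              ENNReal.ofReal (Real.exp (-(dist x y)^2/(4*r^2))) ∂μ := by
            apply setLIntegral_mono ((hmeas (r^2)).const_mul _)
            intro y hy
            have hd : r ≤ dist x y := by
              rw [dist_comm]
              exact not_lt.mp (by simpa [mem_ball] using hy)
            rw [hg, ← ENNReal.ofReal_mul (Real.exp_pos _).le, ← Real.exp_add]
            apply ENNReal.ofReal_le_ofReal
            apply Real.exp_le_exp.mpr
            have hdpos : 0 < dist x y := lt_of_lt_of_le hr hd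
            have e1 : -(dist x y)^2/(4*(δ*r^2)) = -((dist x y)^2/(4*r^2)) * δ⁻¹ := by
              field_simp
            have e2 : 1/4 - 1/(4*δ) + -(dist x y)^2/(4*r^2)
                = 1/4 - (1/4)*δ⁻¹ + -((dist x y)^2/(4*r^2)) := by
              field_simp
            rw [e1, e2]
            have ha : 1/4 ≤ (dist x y)^2/(4*r^2) := by
              rw [le_div_iff₀ (by positivity)]
              nlinarith
            have hinv : 1 ≤ δ⁻¹ := by
              nlinarith [mul_inv_cancel₀ hδ0.ne', inv_pos.mpr hδ0,
                mul_pos (inv_pos.mpr hδ0) (sub_pos.mpr hδ1)]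
            nlinarith [mul_nonneg (sub_nonneg.mpr ha) (sub_nonneg.mpr hinv)]
        _ ≤ ∫⁻ y, ENNReal.ofReal (Real.exp (1/4 - 1/(4*δ))) *
              ENNReal.ofReal (Real.exp (-(dist x y)^2/(4*r^2))) ∂μ :=
            setLIntegral_le_lintegral _ _
        _ = _ := lintegral_const_mul _ (hmeas (r^2))
    have hchain : ENNReal.ofReal (c * (4*Real.pi*δ) ^ (n/2) * r ^ n) ≤
        μ (ball x r) + ENNReal.ofReal (Real.exp (1/4 - 1/(4*δ)) * C *
          (4*Real.pi) ^ (n/2) * r ^ n) := by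
      have hA : c * (4*Real.pi*δ) ^ (n/2) * r ^ n = c * (4*Real.pi*(δ*r^2)) ^ (n/2) := by
        rw [show 4*Real.pi*(δ*r^2) = (4*Real.pi*δ) * r^2 by ring, hsq _ (by positivity)]
        ring
      have hT : ENNReal.ofReal (Real.exp (1/4 - 1/(4*δ))) *
          ENNReal.ofReal (C * (4*Real.pi*r^2) ^ (n/2)) =
          ENNReal.ofReal (Real.exp (1/4 - 1/(4*δ)) * C * (4*Real.pi) ^ (n/2) * r ^ n) := by
        rw [← ENNReal.ofReal_mul (Real.exp_pos _).le]
        congr 1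
        rw [show (4:ℝ)*Real.pi*r^2 = (4*Real.pi) * r^2 by ring, hsq _ hπ]
        ring
      calc ENNReal.ofReal (c * (4*Real.pi*δ) ^ (n/2) * r ^ n)
          = ENNReal.ofReal (c * (4*Real.pi*(δ*r^2)) ^ (n/2)) := by rw [hA]
        _ ≤ ∫⁻ y, g y ∂μ := keylow'
        _ = (∫⁻ y in ball x r, g y ∂μ) + ∫⁻ y in (ball x r)ᶜ, g y ∂μ := hsplit
        _ ≤ μ (ball x r) + ENNReal.ofReal (Real.exp (1/4 - 1/(4*δ))) *
              ∫⁻ y, ENNReal.ofReal (Real.exp (-(dist x y)^2/(4*r^2))) ∂μ :=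
            add_le_add hball htail
        _ ≤ μ (ball x r) + ENNReal.ofReal (Real.exp (1/4 - 1/(4*δ))) *
              ENNReal.ofReal (C * (4*Real.pi*r^2) ^ (n/2)) :=
            add_le_add_right (mul_le_mul_right keyup _) _
        _ = _ := by rw [hT]
    -- finish with an ENNReal subtraction argument
    have hsub := tsub_le_iff_right.mpr hchain
    rw [← ENNReal.ofReal_sub _ (by positivity)] at hsub
    refine le_trans (ENNReal.ofReal_le_ofReal ?_) hsub
    have hrpow : (0:ℝ) < r ^ n := Real.rpow_pos_of_pos hr _
    have hmulrpow : (4*Real.pi*δ) ^ (n/2) = (4*Real.pi) ^ (n/2) * δ ^ (n/2) :=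
      Real.mul_rpow hπ.le hδ0.le
    have hTle : Real.exp (1/4 - 1/(4*δ)) * C * (4*Real.pi) ^ (n/2) * r ^ n ≤
        c/2 * (4*Real.pi*δ) ^ (n/2) * r ^ n := by
      rw [hmulrpow]
      have := mul_le_mul_of_nonneg_right hδ
        (mul_nonneg (Real.rpow_nonneg hπ.le (n/2)) hrpow.le)
      calc Real.exp (1/4 - 1/(4*δ)) * C * (4*Real.pi) ^ (n/2) * r ^ n
          = Real.exp (1/4 - 1/(4*δ)) * C * ((4*Real.pi) ^ (n/2) * r ^ n) := by ring
        _ ≤ c/2 * δ ^ (n/2) * ((4*Real.pi) ^ (n/2) * r ^ n) := this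
        _ = c/2 * ((4*Real.pi) ^ (n/2) * δ ^ (n/2)) * r ^ n := by ring
    nlinarith [hTle]
  · -- upper bound
    have hlow : ENNReal.ofReal (Real.exp (-(1/4))) * μ (ball x r) ≤
        ∫⁻ y, ENNReal.ofReal (Real.exp (-(dist x y)^2/(4*r^2))) ∂μ := by
      calc ENNReal.ofReal (Real.exp (-(1/4))) * μ (ball x r)
          = ∫⁻ _ in ball x r, ENNReal.ofReal (Real.exp (-(1/4))) ∂μ :=
            (setLIntegral_const _ _).symm
        _ ≤ ∫⁻ y in ball x r, ENNReal.ofReal (Real.exp (-(dist x y)^2/(4*r^2))) ∂μ := by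
            apply setLIntegral_mono (hmeas (r^2))
            intro y hy
            apply ENNReal.ofReal_le_ofReal
            apply Real.exp_le_exp.mpr
            have hd : dist x y < r := by rw [dist_comm]; exact mem_ball.mp hy
            have hd2 : (dist x y)^2 ≤ r^2 := by nlinarith [dist_nonneg (x := x) (y := y)]
            rw [neg_div, neg_le_neg_iff, div_le_iff₀ (by positivity)]
            nlinarith
        _ ≤ _ := setLIntegral_le_lintegral _ _
    have h2 : ENNReal.ofReal (Real.exp (-(1/4))) * μ (ball x r) ≤
        ENNReal.ofReal (C * (4*Real.pi*r^2) ^ (n/2)) := le_trans hlow keyup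
    have hexp : Real.exp (-(1/4)) = (Real.exp (1/4))⁻¹ := Real.exp_neg _
    rw [hexp] at h2
    have := ofReal_cancel_le (Real.exp_pos (1/4)) h2
    calc μ (ball x r) ≤ ENNReal.ofReal (Real.exp (1/4)) *
          ENNReal.ofReal (C * (4*Real.pi*r^2) ^ (n/2)) := this
      _ = ENNReal.ofReal (C * (4*Real.pi) ^ (n/2) * Real.exp (1/4) * r ^ n) := by
          rw [← ENNReal.ofReal_mul (Real.exp_pos _).le]
          congr 1
          rw [show (4:ℝ)*Real.pi*r^2 = (4*Real.pi) * r^2 by ring, hsq _ hπ]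
          ring
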